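/- For every unsatisfiable hitting clause-set F with F ≠ {∅} (i.e., n(F) > 0), the number nfc(F) of full clauses of F is even. -/

import Mathlib

/-- A clause: a finite set of nonzero integers (literals) that is clash-free. -/
def IsClause (C : Finset ℤ) : Prop := (0 : ℤ) ∉ C ∧ ∀ x ∈ C, -x ∉ C

/-- A clause-set: a finite set of clauses. -/
def IsClauseSet (F : Finset (Finset ℤ)) : Prop := ∀ C ∈ F, IsClause C

/-- The variables of a clause: the absolute values of its literals. -/
def clauseVar (C : Finset ℤ) : Finset ℕ := C.image Int.natAbs

/-- The variables of a clause-set. -/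
def var (F : Finset (Finset ℤ)) : Finset ℕ := F.biUnion clauseVar

/-- The number of variables `n(F)`. -/
def numVar (F : Finset (Finset ℤ)) : ℕ := (var F).card

/-- The deficiency `δ(F) = c(F) - n(F)`. -/
def deficiency (F : Finset (Finset ℤ)) : ℤ := (F.card : ℤ) - (numVar F : ℤ)

/-- `F` is satisfiable iff some clause `C` intersects every clause of `F`. -/
def Satisfiable (F : Finset (Finset ℤ)) : Prop :=
  ∃ C : Finset ℤ, IsClause C ∧ ∀ D ∈ F, (C ∩ D).Nonempty

/-- `F` is hitting iff any two distinct clauses of `F` clash. -/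
def Hitting (F : Finset (Finset ℤ)) : Prop :=
  ∀ C ∈ F, ∀ D ∈ F, C ≠ D → ∃ x ∈ C, -x ∈ D

/-- `F` is minimally unsatisfiable. -/
def MinUnsat (F : Finset (Finset ℤ)) : Prop :=
  ¬ Satisfiable F ∧ ∀ G ⊂ F, Satisfiable G

/-- The number of full clauses of `F`. -/
def nfc (F : Finset (Finset ℤ)) : ℕ :=
  (F.filter (fun C => clauseVar C = var F)).card

/-- The degree of a variable `v` in `F`. -/
def vdeg (F : Finset (Finset ℤ)) (v : ℕ) : ℕ :=
  (F.filter (fun C => v ∈ clauseVar C)).card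

/-- The minimal variable-degree of `F` (for `n(F) > 0`). -/
noncomputable def minVarDeg (F : Finset (Finset ℤ)) : ℕ :=
  sInf {d : ℕ | ∃ v ∈ var F, vdeg F v = d}

def litTrue (T : Finset ℕ) (x : ℤ) : Prop :=
  (0 < x ∧ x.natAbs ∈ T) ∨ (x < 0 ∧ x.natAbs ∉ T)

instance (T : Finset ℕ) (x : ℤ) : Decidable (litTrue T x) := by
  unfold litTrue; infer_instance

def falsifies (T : Finset ℕ) (C : Finset ℤ) : Prop := ∀ x ∈ C, ¬ litTrue T x

instance (T : Finset ℕ) (C : Finset ℤ) : Decidable (falsifies T C) := by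
  unfold falsifies; infer_instance

def negVars (C : Finset ℤ) : Finset ℕ := (C.filter (fun x => x < 0)).image Int.natAbs

def falsSet (V : Finset ℕ) (C : Finset ℤ) : Finset (Finset ℕ) :=
  V.powerset.filter (fun T => falsifies T C)

lemma litTrue_or_neg (T : Finset ℕ) (x : ℤ) (hx : x ≠ 0) :
    litTrue T x ∨ litTrue T (-x) := by
  rcases lt_trichotomy x 0 with h | h | h
  · by_cases hT : x.natAbs ∈ T
    · right; left; exact ⟨by omega, by simpa [Int.natAbs_neg] using hT⟩
    · left; right; exact ⟨h, hT⟩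
  · exact absurd h hx
  · by_cases hT : x.natAbs ∈ T
    · left; left; exact ⟨h, hT⟩
    · right; right; constructor; omega; simpa [Int.natAbs_neg] using hT

lemma card_clauseVar (C : Finset ℤ) (hC : IsClause C) : (clauseVar C).card = C.card := by
  apply Finset.card_image_of_injOn
  intro x hx y hy hxy
  rcases Int.natAbs_eq_natAbs_iff.mp hxy with h | h
  · exact h
  · exact absurd (show -x ∈ C by rw [h]; simpa using hy) (hC.2 x hx)

lemma card_falsSet (V : Finset ℕ) (C : Finset ℤ) (hC : IsClause C)
    (hsub : clauseVar C ⊆ V) :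
    (falsSet V C).card = 2 ^ (V.card - C.card) := by
  have hnv : negVars C ⊆ clauseVar C := by
    intro v hv
    simp only [negVars, Finset.mem_image, Finset.mem_filter] at hv
    obtain ⟨x, ⟨hx, _⟩, rfl⟩ := hv
    exact Finset.mem_image_of_mem _ hx
  have key : (falsSet V C).card = ((V \ clauseVar C).powerset).card := by
    apply Finset.card_bij' (fun T _ => T \ clauseVar C) (fun S _ => S ∪ negVars C)
    · intro T hT
      simp only [falsSet, Finset.mem_filter, Finset.mem_powerset] at hT
      simp only [Finset.mem_powerset]
      exact Finset.sdiff_subset_sdiff hT.1 (le_refl _)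
    · intro S hS
      simp only [Finset.mem_powerset] at hS
      simp only [falsSet, Finset.mem_filter, Finset.mem_powerset]
      constructor
      · exact Finset.union_subset (hS.trans (Finset.sdiff_subset)) (hnv.trans hsub)
      · intro x hx hlt
        have hx0 : x ≠ 0 := fun h => hC.1 (h ▸ hx)
        have hcv : x.natAbs ∈ clauseVar C := Finset.mem_image_of_mem _ hx
        have hnotS : x.natAbs ∉ S := fun h => by
          have := hS h; simp only [Finset.mem_sdiff] at this; exact this.2 hcv
        rcases hlt with ⟨hpos, hmem⟩ | ⟨hneg, hmem⟩
        · rcases Finset.mem_union.mp hmem with h | h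
          · exact hnotS h
          · simp only [negVars, Finset.mem_image, Finset.mem_filter] at h
            obtain ⟨y, ⟨hy, hylt⟩, hxy⟩ := h
            rcases Int.natAbs_eq_natAbs_iff.mp hxy with h | h
            · omega
            · exact hC.2 x hx (h ▸ hy)
        · apply hmem
          apply Finset.mem_union_right
          simp only [negVars, Finset.mem_image, Finset.mem_filter]
          exact ⟨x, ⟨hx, hneg⟩, rfl⟩
    · intro T hT
      simp only [falsSet, Finset.mem_filter, Finset.mem_powerset] at hT
      have hint : T ∩ clauseVar C = negVars C := by
        ext v
        simp only [Finset.mem_inter, negVars, Finset.mem_image, Finset.mem_filter]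
        constructor
        · rintro ⟨hvT, hvc⟩
          simp only [clauseVar, Finset.mem_image] at hvc
          obtain ⟨x, hx, rfl⟩ := hvc
          have hx0 : x ≠ 0 := fun h => hC.1 (h ▸ hx)
          refine ⟨x, ⟨hx, ?_⟩, rfl⟩
          by_contra hge
          exact hT.2 x hx (Or.inl ⟨by omega, hvT⟩)
        · rintro ⟨x, ⟨hx, hxlt⟩, rfl⟩
          refine ⟨?_, Finset.mem_image_of_mem _ hx⟩
          by_contra hvT
          exact hT.2 x hx (Or.inr ⟨hxlt, hvT⟩)
      ext v
      simp only [Finset.mem_union, Finset.mem_sdiff]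
      constructor
      · rintro (⟨h, _⟩ | h)
        · exact h
        · have : v ∈ T ∩ clauseVar C := hint ▸ h
          exact (Finset.mem_inter.mp this).1
      · intro hvT
        by_cases hvc : v ∈ clauseVar C
        · right; rw [← hint]; exact Finset.mem_inter.mpr ⟨hvT, hvc⟩
        · left; exact ⟨hvT, hvc⟩
    · intro S hS
      simp only [Finset.mem_powerset] at hS
      ext v
      simp only [Finset.mem_sdiff, Finset.mem_union]
      constructor
      · rintro ⟨h | h, hnc⟩
        · exact h
        · exact absurd (hnv h) hnc
      · intro hvS
        have : v ∉ clauseVar C := fun h => by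
          have := hS hvS; simp only [Finset.mem_sdiff] at this; exact this.2 h
        exact ⟨Or.inl hvS, this⟩
  rw [key, Finset.card_powerset, Finset.card_sdiff_of_subset hsub, card_clauseVar C hC]

theorem stmt_15 (F : Finset (Finset ℤ)) (hF : IsClauseSet F)
    (hunsat : ¬ Satisfiable F) (hhit : Hitting F)
    (hne : F ≠ ({∅} : Finset (Finset ℤ))) :
    Even (nfc F) := by
  classical
  set V := var F with hV
  have hvpos : ∀ v ∈ V, v ≠ 0 := by
    intro v hv
    simp only [hV, var, Finset.mem_biUnion, clauseVar, Finset.mem_image] at hv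
    obtain ⟨C, hC, x, hx, rfl⟩ := hv
    have : x ≠ 0 := fun h => (hF C hC).1 (h ▸ hx)
    simpa using this
  have hFne : F.Nonempty := by
    rcases Finset.eq_empty_or_nonempty F with h | h
    · exact absurd ⟨∅, ⟨by simp, by simp⟩, by simp [h]⟩ hunsat
    · exact h
  have hemp : ∅ ∉ F := by
    intro h0
    obtain ⟨D, hD, hDne⟩ : ∃ D ∈ F, D ≠ ∅ := by
      by_contra hc; push_neg at hc
      apply hne
      apply Finset.Subset.antisymm
      · intro C hC; simp [hc C hC]
      · intro C hC; simp only [Finset.mem_singleton] at hC; exact hC ▸ h0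
    obtain ⟨x, hx, _⟩ := hhit ∅ h0 D hD (Ne.symm hDne)
    exact absurd hx (by simp)
  have hsub : ∀ C ∈ F, clauseVar C ⊆ V := fun C hC => Finset.subset_biUnion_of_mem _ hC
  -- cover
  have hcover : V.powerset = F.biUnion (falsSet V) := by
    apply Finset.Subset.antisymm
    · intro T hT
      simp only [Finset.mem_powerset] at hT
      set C₀ : Finset ℤ := V.image (fun v => if v ∈ T then (v : ℤ) else -(v : ℤ)) with hC₀
      have hnatAbs : ∀ v ∈ V, (if v ∈ T then (v : ℤ) else -(v : ℤ)).natAbs = v := by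
        intro v _; split <;> simp
      have hclause : IsClause C₀ := by
        constructor
        · intro h0
          simp only [hC₀, Finset.mem_image] at h0
          obtain ⟨v, hv, hveq⟩ := h0
          have := hnatAbs v hv
          rw [hveq] at this
          exact hvpos v hv (by simpa using this.symm)
        · intro x hx hnx
          simp only [hC₀, Finset.mem_image] at hx hnx
          obtain ⟨v, hv, hveq⟩ := hx
          obtain ⟨w, hw, hweq⟩ := hnx
          have h1 := hnatAbs v hv; rw [hveq] at h1
          have h2 := hnatAbs w hw; rw [hweq] at h2
          have hvw : v = w := by rw [← h1, ← h2]; simp [Int.natAbs_neg]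
          have hfw : (if w ∈ T then (w : ℤ) else -(w : ℤ)) = x := hvw ▸ hveq
          rw [hfw] at hweq
          have hx0 : x = 0 := by omega
          rw [hx0] at h1
          exact hvpos v hv (by simpa using h1.symm)
      have : ¬ (IsClause C₀ ∧ ∀ D ∈ F, (C₀ ∩ D).Nonempty) := fun h => hunsat ⟨C₀, h⟩
      push_neg at this
      obtain ⟨D, hD, hDint⟩ := this hclause
      have hDint : C₀ ∩ D = ∅ := hDint
      refine Finset.mem_biUnion.mpr ⟨D, hD, ?_⟩
      simp only [falsSet, Finset.mem_filter, Finset.mem_powerset]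
      refine ⟨hT, ?_⟩
      intro x hx hlit
      have hxV : x.natAbs ∈ V := hsub D hD (Finset.mem_image_of_mem _ hx)
      have hxC₀ : x ∈ C₀ := by
        simp only [hC₀, Finset.mem_image]
        rcases hlit with ⟨hpos, hmem⟩ | ⟨hneg, hmem⟩
        · exact ⟨x.natAbs, hxV, by simp [hmem]; omega⟩
        · exact ⟨x.natAbs, hxV, by
            simp [hmem, Int.ofNat_natAbs_of_nonpos (le_of_lt hneg)]⟩
      have : x ∈ C₀ ∩ D := Finset.mem_inter.mpr ⟨hxC₀, hx⟩
      rw [hDint] at this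
      exact absurd this (Finset.notMem_empty x)
    · intro T hT
      obtain ⟨C, _, hTC⟩ := Finset.mem_biUnion.mp hT
      simp only [falsSet, Finset.mem_filter] at hTC
      exact hTC.1
  -- disjointness
  have hdisj : ∀ C ∈ F, ∀ D ∈ F, C ≠ D → Disjoint (falsSet V C) (falsSet V D) := by
    intro C hC D hD hCD
    rw [Finset.disjoint_left]
    intro T hTC hTD
    simp only [falsSet, Finset.mem_filter] at hTC hTD
    obtain ⟨x, hx, hnx⟩ := hhit C hC D hD hCD
    have hx0 : x ≠ 0 := fun h => (hF C hC).1 (h ▸ hx)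
    rcases litTrue_or_neg T x hx0 with h | h
    · exact hTC.2 x hx h
    · exact hTD.2 (-x) hnx h
  -- the counting identity
  have hcount : 2 ^ V.card = ∑ C ∈ F, 2 ^ (V.card - C.card) := by
    calc 2 ^ V.card = V.powerset.card := (Finset.card_powerset V).symm
    _ = (F.biUnion (falsSet V)).card := by rw [hcover]
    _ = ∑ C ∈ F, (falsSet V C).card := Finset.card_biUnion hdisj
    _ = ∑ C ∈ F, 2 ^ (V.card - C.card) :=
        Finset.sum_congr rfl fun C hC => card_falsSet V C (hF C hC) (hsub C hC)
  -- n ≥ 1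
  have hn : 1 ≤ V.card := by
    obtain ⟨C, hC⟩ := hFne
    have : C ≠ ∅ := fun h => hemp (h ▸ hC)
    obtain ⟨x, hx⟩ := Finset.nonempty_iff_ne_empty.mpr this
    have : x.natAbs ∈ V := hsub C hC (Finset.mem_image_of_mem _ hx)
    exact Finset.card_pos.mpr ⟨_, this⟩
  -- reduce mod 2
  have hcast : ((2 : ZMod 2)) ^ V.card = ∑ C ∈ F, (2 : ZMod 2) ^ (V.card - C.card) := by
    have := congrArg (fun n : ℕ => (n : ZMod 2)) hcount
    push_cast at this
    exact this
  have h2 : (2 : ZMod 2) = 0 := by decide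
  rw [h2, zero_pow (by omega)] at hcast
  have hterm : ∀ C ∈ F, (0 : ZMod 2) ^ (V.card - C.card) =
      if clauseVar C = V then 1 else 0 := by
    intro C hC
    have hle : C.card ≤ V.card := by
      rw [← card_clauseVar C (hF C hC)]
      exact Finset.card_le_card (hsub C hC)
    by_cases hfull : clauseVar C = V
    · have : C.card = V.card := by rw [← card_clauseVar C (hF C hC), hfull]
      simp [hfull, this]
    · have hlt : C.card < V.card := by
        rcases lt_or_eq_of_le hle with h | h
        · exact h
        · exfalso
          apply hfull
          apply Finset.eq_of_subset_of_card_le (hsub C hC)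
          rw [card_clauseVar C (hF C hC)]; omega
      rw [zero_pow (by omega)]
      simp [hfull]
  rw [Finset.sum_congr rfl hterm, Finset.sum_boole] at hcast
  have : ((nfc F : ℕ) : ZMod 2) = 0 := by
    rw [nfc]; exact hcast.symm
  rw [Nat.even_iff, ← Nat.dvd_iff_mod_eq_zero]
  exact (ZMod.natCast_eq_zero_iff _ 2).mp this
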